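/- Let A be a commutative ring, S = A[s₀,...,s_r] graded, π : ℙ^r_A → Spec A the projection, and w ∈ ℤ. If d ≥ max(w − r, 1), then the degree-zero part of S(d(r+1)−w)/⟨s₀^d,...,s_r^d⟩ is a free A-module isomorphic to H^r(ℙ^r_A, O(−w)); in particular H^r(ℙ^r_A, O(−w)) is free of rank binom(w−1, r) when w ≥ r+1 and zero when w ≤ r. -/

import Mathlib

open MvPolynomial

/-- The concrete model of `H^r(ℙ^r_A, O(-w))`: the free `A`-module on the Laurent
monomials `s₀^(-β₀)⋯s_r^(-β_r)` with all `βᵢ ≥ 1` and `Σ βᵢ = w`; an exponent vector is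
encoded as `β' = β - 1 : Fin (r+1) →₀ ℕ`, so the defining condition reads
`Σ (β'ᵢ + 1) = w`. -/
abbrev TopCohomology (A : Type*) [CommRing A] (r : ℕ) (w : ℤ) : Type _ :=
  {β : Fin (r + 1) →₀ ℕ // (∑ i, ((β i : ℤ) + 1)) = w} →₀ A

/-- The degree-zero part of `S(d(r+1)-w)/⟨s₀^d, …, s_r^d⟩`: the `A`-span of the classes of
the monomials of total degree `d(r+1) - w`. -/
noncomputable def degreeZeroPart (A : Type*) [CommRing A] (r : ℕ) (w : ℤ) (d : ℕ) :
    Submodule A (MvPolynomial (Fin (r + 1)) A ⧸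
      Ideal.span (Set.range fun i : Fin (r + 1) => (X i : MvPolynomial (Fin (r + 1)) A) ^ d)) :=
  Submodule.span A
    ((fun α : Fin (r + 1) →₀ ℕ =>
        Ideal.Quotient.mk
          (Ideal.span (Set.range fun i : Fin (r + 1) => (X i : MvPolynomial (Fin (r + 1)) A) ^ d))
          (monomial α 1)) ''
      {α | (∑ i, (α i : ℤ)) = d * (r + 1) - w})

/-! ### Auxiliary constructions -/

/-- The ideal `⟨s₀^d, …, s_r^d⟩`. -/
noncomputable abbrev dzpIdeal (A : Type*) [CommRing A] (r d : ℕ) : Ideal (MvPolynomial (Fin (r + 1)) A) :=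
  Ideal.span (Set.range fun i : Fin (r + 1) => (X i : MvPolynomial (Fin (r + 1)) A) ^ d)

/-- Index type: exponent vectors `α` with all `αᵢ < d` and total degree `d(r+1) - w`. -/
abbrev GoodIdx (r d : ℕ) (w : ℤ) : Type _ :=
  {α : Fin (r + 1) →₀ ℕ // (∀ i, α i < d) ∧ (∑ i, (α i : ℤ)) = ↑d * (↑r + 1) - w}

/-- Index type of the concrete cohomology model. -/
abbrev BIdx (r : ℕ) (w : ℤ) : Type _ :=
  {β : Fin (r + 1) →₀ ℕ // (∑ i, ((β i : ℤ) + 1)) = w}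

/-- The `A`-linear "truncation" map keeping only monomials with all exponents `< d`. -/
noncomputable def Tmap (A : Type*) [CommRing A] (r d : ℕ) :
    MvPolynomial (Fin (r + 1)) A →ₗ[A] ((Fin (r + 1) →₀ ℕ) →₀ A) :=
  ((basisMonomials (Fin (r + 1)) A).constr A) fun α =>
    if ∀ i, α i < d then Finsupp.single α 1 else 0

lemma Tmap_monomial (A : Type*) [CommRing A] (r d : ℕ) (α : Fin (r + 1) →₀ ℕ) (c : A) :
    Tmap A r d (monomial α c) = if ∀ i, α i < d then Finsupp.single α c else 0 := by
  have h1 : monomial α c = c • monomial α (1 : A) := by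
    rw [smul_monomial, smul_eq_mul, mul_one]
  have hb : monomial α (1 : A) = (basisMonomials (Fin (r + 1)) A) α := by
    rw [coe_basisMonomials]
  rw [h1, map_smul, hb, Tmap, Module.Basis.constr_basis]
  split_ifs <;> simp

lemma support_big_of_mem_ideal {A : Type*} [CommRing A] {r d : ℕ}
    {q : MvPolynomial (Fin (r + 1)) A} (hq : q ∈ dzpIdeal A r d) :
    ∀ α ∈ q.support, ∃ i, d ≤ α i := by
  refine Submodule.span_induction ?_ ?_ ?_ ?_ hq
  · rintro x ⟨i, rfl⟩ α hα
    have hα : α ∈ ((X i : MvPolynomial (Fin (r + 1)) A) ^ d).support := hα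
    rw [X_pow_eq_monomial] at hα
    have := MvPolynomial.support_monomial_subset hα
    rw [Finset.mem_singleton] at this
    subst this
    exact ⟨i, by simp⟩
  · intro α hα
    simp at hα
  · intro x y _ _ hx hy α hα
    rcases Finset.mem_union.mp (MvPolynomial.support_add hα) with h | h
    · exact hx α h
    · exact hy α h
  · intro a x _ hx α hα
    rw [smul_eq_mul] at hα
    have := MvPolynomial.support_mul a x hα
    rw [Finset.mem_add] at this
    obtain ⟨β, hβ, γ, hγ, rfl⟩ := this
    obtain ⟨i, hi⟩ := hx γ hγ
    exact ⟨i, by simpa using le_add_left hi⟩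

lemma Tmap_eq_zero_of_mem_ideal {A : Type*} [CommRing A] {r d : ℕ}
    {q : MvPolynomial (Fin (r + 1)) A} (hq : q ∈ dzpIdeal A r d) :
    Tmap A r d q = 0 := by
  have hs := support_big_of_mem_ideal hq
  conv_lhs => rw [← support_sum_monomial_coeff q]
  rw [map_sum]
  refine Finset.sum_eq_zero fun α hα => ?_
  rw [Tmap_monomial, if_neg]
  intro h
  obtain ⟨i, hi⟩ := hs α hα
  exact absurd (h i) (not_lt.mpr hi)

/-- The linear map from the free module to the quotient. -/
noncomputable def psi (A : Type*) [CommRing A] (r d : ℕ) (w : ℤ) :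
    (GoodIdx r d w →₀ A) →ₗ[A] (MvPolynomial (Fin (r + 1)) A ⧸ dzpIdeal A r d) :=
  Finsupp.linearCombination A fun α : GoodIdx r d w =>
    Ideal.Quotient.mk (dzpIdeal A r d) (monomial α.1 1)

lemma psi_injective (A : Type*) [CommRing A] (r d : ℕ) (w : ℤ) :
    Function.Injective (psi A r d w) := by
  rw [← LinearMap.ker_eq_bot, LinearMap.ker_eq_bot']
  intro x hx
  have hcomp : psi A r d w x =
      (Ideal.Quotient.mkₐ A (dzpIdeal A r d)).toLinearMap
        (Finsupp.linearCombination A (fun α : GoodIdx r d w => monomial α.1 (1 : A)) x) := by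
    rw [Finsupp.apply_linearCombination]
    rfl
  rw [hcomp] at hx
  have hmem : Finsupp.linearCombination A (fun α : GoodIdx r d w => monomial α.1 (1 : A)) x
      ∈ dzpIdeal A r d := by
    rwa [AlgHom.toLinearMap_apply, Ideal.Quotient.mkₐ_eq_mk, Ideal.Quotient.eq_zero_iff_mem] at hx
  have hT := Tmap_eq_zero_of_mem_ideal hmem
  rw [Finsupp.apply_linearCombination] at hT
  have hTv : (Finsupp.linearCombination A
      ((Tmap A r d) ∘ fun α : GoodIdx r d w => monomial α.1 (1 : A))) x =
      Finsupp.mapDomain Subtype.val x := by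
    rw [Finsupp.linearCombination_apply, Finsupp.mapDomain]
    refine Finsupp.sum_congr fun α _ => ?_
    simp only [Function.comp_apply, Tmap_monomial, if_pos α.2.1, Finsupp.smul_single,
      smul_eq_mul, mul_one]
  rw [hTv] at hT
  exact Finsupp.mapDomain_injective Subtype.val_injective (by simpa using hT)

lemma psi_range (A : Type*) [CommRing A] (r d : ℕ) (w : ℤ) :
    LinearMap.range (psi A r d w) = degreeZeroPart A r w d := by
  rw [psi, Finsupp.range_linearCombination]
  apply le_antisymm
  · rw [Submodule.span_le]
    rintro _ ⟨α, rfl⟩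
    exact Submodule.subset_span ⟨α.1, α.2.2, rfl⟩
  · rw [degreeZeroPart, Submodule.span_le]
    rintro _ ⟨α, hα, rfl⟩
    by_cases h : ∀ i, α i < d
    · exact Submodule.subset_span ⟨⟨α, h, hα⟩, rfl⟩
    · push_neg at h
      obtain ⟨i, hi⟩ := h
      have hmem : monomial α (1 : A) ∈ dzpIdeal A r d := by
        have heq : monomial α (1 : A) =
            monomial (α - Finsupp.single i d) 1 * (X i ^ d) := by
          rw [X_pow_eq_monomial, monomial_mul, one_mul,
            tsub_add_cancel_of_le (Finsupp.single_le_iff.mpr hi)]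
        rw [heq]
        exact Ideal.mul_mem_left _ _ (Ideal.subset_span ⟨i, rfl⟩)
      have h0 : Ideal.Quotient.mk (dzpIdeal A r d) (monomial α (1 : A)) = 0 :=
        Ideal.Quotient.eq_zero_iff_mem.mpr hmem
      show Ideal.Quotient.mk (dzpIdeal A r d) (monomial α (1 : A)) ∈ _
      rw [h0]
      exact Submodule.zero_mem _

lemma bidx_le {r : ℕ} {w : ℤ} (β : BIdx r w) (j : Fin (r + 1)) :
    (β.1 j : ℤ) + 1 + r ≤ w := by
  have hsum : ((β.1 j : ℤ) + 1) + ∑ i ∈ Finset.univ.erase j, ((β.1 i : ℤ) + 1) = w :=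
    (Finset.add_sum_erase Finset.univ (fun i => ((β.1 i : ℤ) + 1))
      (Finset.mem_univ j)).trans β.2
  have hge : (r : ℤ) ≤ ∑ i ∈ Finset.univ.erase j, ((β.1 i : ℤ) + 1) := by
    have hcard : (Finset.univ.erase j).card = r := by
      rw [Finset.card_erase_of_mem (Finset.mem_univ j), Finset.card_univ, Fintype.card_fin]
      omega
    have := Finset.card_nsmul_le_sum (Finset.univ.erase j)
      (fun i => (β.1 i : ℤ) + 1) 1
      (fun i _ => by exact le_add_of_nonneg_left (Int.natCast_nonneg _))
    rw [hcard] at this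
    simpa using this
  linarith

lemma bidx_le_nat {r d : ℕ} {w : ℤ} (hd : max (w - ↑r) 1 ≤ (d : ℤ)) (β : BIdx r w)
    (j : Fin (r + 1)) : β.1 j ≤ d - 1 := by
  have h1 := bidx_le β j
  have h2 : w - ↑r ≤ (d : ℤ) := le_trans (le_max_left _ _) hd
  have h3 : (1 : ℤ) ≤ (d : ℤ) := le_trans (le_max_right _ _) hd
  omega

/-- The bijection between exponent vectors, `β i = d - 1 - α i`. -/
noncomputable def goodEquiv (r d : ℕ) (w : ℤ) (hd : max (w - ↑r) 1 ≤ (d : ℤ)) :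
    GoodIdx r d w ≃ BIdx r w where
  toFun α := ⟨Finsupp.equivFunOnFinite.symm fun i => d - 1 - α.1 i, by
    have h3 : (1 : ℤ) ≤ (d : ℤ) := le_trans (le_max_right _ _) hd
    have hcast : ∀ i, ((d - 1 - α.1 i : ℕ) : ℤ) = (d : ℤ) - 1 - α.1 i := by
      intro i; have := α.2.1 i; omega
    have : ∑ i, (((Finsupp.equivFunOnFinite.symm fun i => d - 1 - α.1 i) i : ℤ) + 1)
        = ∑ i : Fin (r + 1), ((d : ℤ) - α.1 i) := by
      refine Finset.sum_congr rfl fun i _ => ?_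
      rw [Finsupp.coe_equivFunOnFinite_symm, hcast]
      ring
    rw [this, Finset.sum_sub_distrib, Finset.sum_const, Finset.card_univ, Fintype.card_fin,
      α.2.2]
    ring⟩
  invFun β := ⟨Finsupp.equivFunOnFinite.symm fun i => d - 1 - β.1 i, by
    have h3 : (1 : ℤ) ≤ (d : ℤ) := le_trans (le_max_right _ _) hd
    have hle := bidx_le_nat hd β
    constructor
    · intro i
      rw [Finsupp.coe_equivFunOnFinite_symm]
      omega
    · have hcast : ∀ i, ((d - 1 - β.1 i : ℕ) : ℤ) = (d : ℤ) - 1 - β.1 i := by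
        intro i; have := hle i; omega
      have : ∑ i, ((Finsupp.equivFunOnFinite.symm fun i => d - 1 - β.1 i) i : ℤ)
          = ∑ i : Fin (r + 1), ((d : ℤ) - ((β.1 i : ℤ) + 1)) := by
        refine Finset.sum_congr rfl fun i _ => ?_
        rw [Finsupp.coe_equivFunOnFinite_symm, hcast]
        ring
      rw [this, Finset.sum_sub_distrib, Finset.sum_const, Finset.card_univ, Fintype.card_fin,
        β.2]
      ring⟩
  left_inv α := by
    ext i
    simp only [Finsupp.coe_equivFunOnFinite_symm]
    have := α.2.1 i
    omega
  right_inv β := by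
    ext i
    simp only [Finsupp.coe_equivFunOnFinite_symm]
    have h3 : (1 : ℤ) ≤ (d : ℤ) := le_trans (le_max_right _ _) hd
    have := bidx_le_nat hd β i
    omega

/-- The equiv of `BIdx` with symmetric powers, for counting. -/
noncomputable def bidxEquivSym (r : ℕ) (w : ℤ) (hw : (r : ℤ) + 1 ≤ w) :
    BIdx r w ≃ Sym (Fin (r + 1)) (w - ↑r - 1).toNat := by
  have hm : ((w - ↑r - 1).toNat : ℤ) = w - ↑r - 1 := Int.toNat_of_nonneg (by omega)
  refine Equiv.subtypeEquiv Multiset.toFinsupp.toEquiv.symm fun β => ?_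
  rw [show (Multiset.toFinsupp.toEquiv.symm β : Multiset (Fin (r + 1))) = Finsupp.toMultiset β
    from rfl]
  rw [Finsupp.card_toMultiset, Finsupp.sum_fintype _ _ (fun i => rfl)]
  simp only [id_eq]
  have hcast : ((∑ i, β i : ℕ) : ℤ) = ∑ i, (β i : ℤ) := by push_cast; rfl
  rw [Finset.sum_add_distrib, Finset.sum_const, Finset.card_univ, Fintype.card_fin,
    show ((r + 1) • (1 : ℤ)) = (r : ℤ) + 1 by simp]
  omega

lemma bidx_isEmpty {r : ℕ} {w : ℤ} (hw : w ≤ r) : IsEmpty (BIdx r w) := by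
  refine ⟨fun β => ?_⟩
  have := bidx_le β 0
  have : (0 : ℤ) ≤ (β.1 0 : ℤ) := Int.natCast_nonneg _
  have := bidx_le β 0
  omega

theorem degree_zero_part_iso_top_cohomology
    (A : Type*) [CommRing A] (r : ℕ) (w : ℤ) (d : ℕ)
    (hd : max (w - r) 1 ≤ (d : ℤ)) :
    Module.Free A (degreeZeroPart A r w d) ∧
    Nonempty ((degreeZeroPart A r w d) ≃ₗ[A] TopCohomology A r w) ∧
    ((r : ℤ) + 1 ≤ w →
      Nonempty (TopCohomology A r w ≃ₗ[A] (Fin ((w - 1).toNat.choose r) → A))) ∧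
    (w ≤ r → Subsingleton (TopCohomology A r w)) := by
  have e1 : (GoodIdx r d w →₀ A) ≃ₗ[A] degreeZeroPart A r w d :=
    (LinearEquiv.ofInjective (psi A r d w) (psi_injective A r d w)).trans
      (LinearEquiv.ofEq _ _ (psi_range A r d w))
  refine ⟨Module.Free.of_equiv e1, ⟨e1.symm.trans (Finsupp.domLCongr (goodEquiv r d w hd))⟩,
    ?_, ?_⟩
  · intro hw
    set m := (w - ↑r - 1).toNat with hm_def
    have hm : (m : ℤ) = w - ↑r - 1 := Int.toNat_of_nonneg (by omega)
    have eSym : BIdx r w ≃ Sym (Fin (r + 1)) m := bidxEquivSym r w hw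
    have : Fintype (BIdx r w) := Fintype.ofEquiv _ eSym.symm
    have hcard : Fintype.card (BIdx r w) = (w - 1).toNat.choose r := by
      rw [Fintype.card_congr eSym, Sym.card_sym_eq_multichoose, Fintype.card_fin,
        Nat.multichoose_eq]
      have h1 : r + 1 + m - 1 = r + m := by omega
      have h2 : (w - 1).toNat = r + m := by omega
      rw [h1, h2]
      have := Nat.choose_symm (n := r + m) (k := r) (by omega)
      simpa [show r + m - r = m by omega] using this
    exact ⟨(Finsupp.domLCongr (Fintype.equivFinOfCardEq hcard)).trans
      (Finsupp.linearEquivFunOnFinite A A (Fin ((w - 1).toNat.choose r)))⟩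
  · intro hw
    have he := bidx_isEmpty (r := r) (w := w) hw
    exact ⟨fun f g => by ext a; exact (he.false a).elim⟩
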